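/- Set λ1 = (h1+h2+h3+h4−l1−l2−l3−l4+3)/2. Then d²⁻⁻(λ1) = 0, d²⁻⁻(λ1+1) = 0, and d²⁻(λ1) = 0. Consequently λ1 and λ1+1 are the exponents of the equation (A² − E)g = 0 at the regular singularity x = 0, and this singularity is apparent (non-logarithmic). -/
import Mathlib


noncomputable def qp (q r : ℝ) : ℂ := ((q ^ r : ℝ) : ℂ)

noncomputable def d2m (q h1 h2 h3 h4 l1 l2 l3 l4 : ℝ) (t1 t2 t3 t4 : ℂ) (μ : ℝ) : ℂ :=
  t1 * t2 * t3 * t4 *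
    ((qp q ((h1 + h2 + h3 + h4 + l1 + l2 + l3 + l4) / 2) * (qp q (-h1) + qp q (-l1))
        - qp q (h1 + h2 + h3 + h4 + 3/2 - μ) * qp q (-h1)
        - qp q (l1 + l2 + l3 + l4 - 3/2 + μ) * qp q (-l1)) * t1⁻¹
      + (qp q ((h1 + h2 + h3 + h4 + l1 + l2 + l3 + l4) / 2) * (qp q (-h2) + qp q (-l2))
        - qp q (h1 + h2 + h3 + h4 + 3/2 - μ) * qp q (-h2)
        - qp q (l1 + l2 + l3 + l4 - 3/2 + μ) * qp q (-l2)) * t2⁻¹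
      + (qp q ((h1 + h2 + h3 + h4 + l1 + l2 + l3 + l4) / 2) * (qp q (-h3) + qp q (-l3))
        - qp q (h1 + h2 + h3 + h4 + 3/2 - μ) * qp q (-h3)
        - qp q (l1 + l2 + l3 + l4 - 3/2 + μ) * qp q (-l3)) * t3⁻¹
      + (qp q ((h1 + h2 + h3 + h4 + l1 + l2 + l3 + l4) / 2) * (qp q (-h4) + qp q (-l4))
        - qp q (h1 + h2 + h3 + h4 + 3/2 - μ) * qp q (-h4)
        - qp q (l1 + l2 + l3 + l4 - 3/2 + μ) * qp q (-l4)) * t4⁻¹)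

noncomputable def d2mm (q h1 h2 h3 h4 l1 l2 l3 l4 : ℝ) (t1 t2 t3 t4 : ℂ) (μ : ℝ) : ℂ :=
  (qp q (h1 + h2 + h3 + h4 + 2 - μ) + qp q (l1 + l2 + l3 + l4 - 2 + μ)
      - qp q ((h1 + h2 + h3 + h4 + l1 + l2 + l3 + l4) / 2) * (qp q (1/2) + qp q (-(1/2))))
    * t1 * t2 * t3 * t4

theorem stmt7 (q h1 h2 h3 h4 l1 l2 l3 l4 : ℝ) (hq : 0 < q) (hq1 : q ≠ 1)
    (t1 t2 t3 t4 : ℂ) (ht1 : t1 ≠ 0) (ht2 : t2 ≠ 0) (ht3 : t3 ≠ 0) (ht4 : t4 ≠ 0) :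
    d2mm q h1 h2 h3 h4 l1 l2 l3 l4 t1 t2 t3 t4
        ((h1 + h2 + h3 + h4 - l1 - l2 - l3 - l4 + 3) / 2) = 0 ∧
    d2mm q h1 h2 h3 h4 l1 l2 l3 l4 t1 t2 t3 t4
        ((h1 + h2 + h3 + h4 - l1 - l2 - l3 - l4 + 3) / 2 + 1) = 0 ∧
    d2m q h1 h2 h3 h4 l1 l2 l3 l4 t1 t2 t3 t4
        ((h1 + h2 + h3 + h4 - l1 - l2 - l3 - l4 + 3) / 2) = 0 := by

  have hcong : ∀ r s : ℝ, r = s → qp q r = qp q s := fun r s h => by rw [h]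
  have hadd : ∀ r s : ℝ, qp q (r + s) = qp q r * qp q s := by
    intro r s
    unfold qp
    rw [Real.rpow_add hq]
    push_cast
    ring
  refine ⟨?_, ?_, ?_⟩
  · unfold d2mm
    rw [hcong (h1 + h2 + h3 + h4 + 2 - (h1 + h2 + h3 + h4 - l1 - l2 - l3 - l4 + 3) / 2)
        ((h1 + h2 + h3 + h4 + l1 + l2 + l3 + l4) / 2 + 1/2) (by ring),
      hcong (l1 + l2 + l3 + l4 - 2 + (h1 + h2 + h3 + h4 - l1 - l2 - l3 - l4 + 3) / 2)
        ((h1 + h2 + h3 + h4 + l1 + l2 + l3 + l4) / 2 + -(1/2)) (by ring),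
      hadd, hadd]
    ring
  · unfold d2mm
    rw [hcong (h1 + h2 + h3 + h4 + 2 - ((h1 + h2 + h3 + h4 - l1 - l2 - l3 - l4 + 3) / 2 + 1))
        ((h1 + h2 + h3 + h4 + l1 + l2 + l3 + l4) / 2 + -(1/2)) (by ring),
      hcong (l1 + l2 + l3 + l4 - 2 + ((h1 + h2 + h3 + h4 - l1 - l2 - l3 - l4 + 3) / 2 + 1))
        ((h1 + h2 + h3 + h4 + l1 + l2 + l3 + l4) / 2 + 1/2) (by ring),
      hadd, hadd]
    ring
  · unfold d2m
    rw [hcong (h1 + h2 + h3 + h4 + 3/2 - (h1 + h2 + h3 + h4 - l1 - l2 - l3 - l4 + 3) / 2)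
        ((h1 + h2 + h3 + h4 + l1 + l2 + l3 + l4) / 2) (by ring),
      hcong (l1 + l2 + l3 + l4 - 3/2 + (h1 + h2 + h3 + h4 - l1 - l2 - l3 - l4 + 3) / 2)
        ((h1 + h2 + h3 + h4 + l1 + l2 + l3 + l4) / 2) (by ring)]
    ring
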